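/- In the 4-dimensional Lie algebra with basis X1, X2, X3, X4 and brackets [X1,X2] = X3, [X1,X3] = X4, [X1,X4] = T3·X3, [X2,X3] = T6·X1 + T4·X2, [X2,X4] = T4·X3, [X3,X4] = −T6·T3·X1 − T4·T3·X2 + T4·X4, the element X4' = X4 + T4·X1 − T3·X2 is central, i.e. [X4', Y] = 0 for all Y in the algebra. -/

import Mathlib

theorem engel_type_III_central_element
    (L : Type*) [LieRing L] [LieAlgebra ℝ L]
    (T3 T4 T6 : ℝ) (X1 X2 X3 X4 : L) (B : Module.Basis (Fin 4) ℝ L)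
    (hB0 : B 0 = X1) (hB1 : B 1 = X2) (hB2 : B 2 = X3) (hB3 : B 3 = X4)
    (h12 : ⁅X1, X2⁆ = X3) (h13 : ⁅X1, X3⁆ = X4)
    (h14 : ⁅X1, X4⁆ = T3 • X3)
    (h23 : ⁅X2, X3⁆ = T6 • X1 + T4 • X2)
    (h24 : ⁅X2, X4⁆ = T4 • X3)
    (h34 : ⁅X3, X4⁆ = (-(T6 * T3)) • X1 + (-(T4 * T3)) • X2 + T4 • X4) :
    ∀ Y : L, ⁅X4 + T4 • X1 - T3 • X2, Y⁆ = 0 := by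
  have h41 : ⁅X4, X1⁆ = -(T3 • X3) := by rw [← lie_skew, h14]
  have h42 : ⁅X4, X2⁆ = -(T4 • X3) := by rw [← lie_skew, h24]
  have h43 : ⁅X4, X3⁆ = -((-(T6 * T3)) • X1 + (-(T4 * T3)) • X2 + T4 • X4) := by
    rw [← lie_skew, h34]
  have h21 : ⁅X2, X1⁆ = -X3 := by rw [← lie_skew, h12]
  have e1 : ⁅X4 + T4 • X1 - T3 • X2, X1⁆ = 0 := by
    simp only [add_lie, sub_lie, smul_lie, h41, h21, lie_self, smul_zero, smul_neg]
    module
  have e2 : ⁅X4 + T4 • X1 - T3 • X2, X2⁆ = 0 := by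
    simp only [add_lie, sub_lie, smul_lie, h42, h12, lie_self, smul_zero]
    module
  have e3 : ⁅X4 + T4 • X1 - T3 • X2, X3⁆ = 0 := by
    simp only [add_lie, sub_lie, smul_lie, h43, h13, h23, smul_add, smul_smul]
    module
  have e4 : ⁅X4 + T4 • X1 - T3 • X2, X4⁆ = 0 := by
    simp only [add_lie, sub_lie, smul_lie, h14, h24, lie_self, smul_smul]
    module
  intro Y
  rw [← B.sum_repr Y]
  simp only [Fin.sum_univ_four, hB0, hB1, hB2, hB3, lie_add, lie_smul, e1, e2, e3, e4, smul_zero, add_zero]
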